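/- Let τ be a real number with 2 < τ < 3, let 0 < ε ≤ 1, and let n ≥ 1 be a real number. Then ∫₁^{n} x^{1−τ} ( ∫_{n/(εx)}^{n} y^{1−τ} dy ) dx ≤ ε^{τ−2} · n^{2−τ} · log(n) / (τ − 2). -/
import Mathlib


open MeasureTheory intervalIntegral

/-- Explicit bound from the paper's Lemma 6.1 (minor contributions, Range I):
contribution of pairs with degree product above `n/ε`. -/
theorem stmt_19 (τ ε n : ℝ) (hτ2 : 2 < τ) (hτ3 : τ < 3) (hε0 : 0 < ε)
    (hε1 : ε ≤ 1) (hn : 1 ≤ n) :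
    (∫ x in (1 : ℝ)..n, x ^ (1 - τ) * ∫ y in (n / (ε * x))..n, y ^ (1 - τ))
      ≤ ε ^ (τ - 2) * n ^ (2 - τ) * Real.log n / (τ - 2) := by
  have hn0 : (0:ℝ) < n := lt_of_lt_of_le zero_lt_one hn
  have hτ2' : (0:ℝ) < τ - 2 := by linarith
  have h2τ : (2:ℝ) - τ ≠ 0 := by linarith
  set f : ℝ → ℝ := fun x => x ^ (1-τ) * ((n^(2-τ) - (n/(ε*x))^(2-τ))/(2-τ)) with hf
  set C : ℝ := ε^(τ-2) * n^(2-τ) / (τ-2) with hC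
  have hcong : (∫ x in (1 : ℝ)..n, x ^ (1 - τ) * ∫ y in (n / (ε * x))..n, y ^ (1 - τ))
      = ∫ x in (1:ℝ)..n, f x := by
    apply intervalIntegral.integral_congr
    intro x hx
    rw [Set.uIcc_of_le hn] at hx
    have hx0 : (0:ℝ) < x := lt_of_lt_of_le zero_lt_one hx.1
    have ha : (0:ℝ) < n/(ε*x) := div_pos hn0 (mul_pos hε0 hx0)
    show x ^ (1 - τ) * (∫ y in (n / (ε * x))..n, y ^ (1 - τ)) = f x
    have hnot : (0:ℝ) ∉ Set.uIcc (n/(ε*x)) n := by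
      rw [Set.mem_uIcc]; push_neg
      constructor <;> intro h <;> [exact absurd h (not_le.mpr ha); exact absurd h (not_le.mpr hn0)]
    rw [integral_rpow (Or.inr ⟨by intro h; rw [show (1:ℝ)-τ = -1 ↔ τ = 2 by constructor <;> intro <;> linarith] at h; linarith, hnot⟩)]
    simp only [hf]
    ring_nf
  rw [hcong]
  have hcont : ContinuousOn f (Set.uIcc (1:ℝ) n) := by
    rw [Set.uIcc_of_le hn]
    apply ContinuousOn.mul
    · exact ContinuousOn.rpow_const continuousOn_id
        (fun x hx => Or.inl (ne_of_gt (lt_of_lt_of_le zero_lt_one hx.1)))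
    · apply ContinuousOn.div_const
      apply ContinuousOn.sub continuousOn_const
      intro x hx
      have hx0 : (0:ℝ) < x := lt_of_lt_of_le zero_lt_one hx.1
      have : ContinuousWithinAt (fun x => n/(ε*x)) (Set.Icc 1 n) x := by
        apply ContinuousWithinAt.div continuousWithinAt_const
        · exact (continuous_const.mul continuous_id).continuousWithinAt
        · exact ne_of_gt (mul_pos hε0 hx0)
      exact ContinuousWithinAt.rpow_const this
        (Or.inl (ne_of_gt (div_pos hn0 (mul_pos hε0 hx0))))
  have hfInt : IntervalIntegrable f volume 1 n := hcont.intervalIntegrable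
  have hgInt : IntervalIntegrable (fun x => C * x⁻¹) volume 1 n := by
    apply IntervalIntegrable.const_mul
    apply intervalIntegrable_inv
    · intro x hx
      rw [Set.uIcc_of_le hn] at hx
      exact ne_of_gt (lt_of_lt_of_le zero_lt_one hx.1)
    · exact continuousOn_id
  have hmono : ∀ x ∈ Set.Icc (1:ℝ) n, f x ≤ C * x⁻¹ := by
    intro x hx
    have hx0 : (0:ℝ) < x := lt_of_lt_of_le zero_lt_one hx.1
    have hεx : (0:ℝ) < ε * x := mul_pos hε0 hx0
    have ha : (n/(ε*x))^(2-τ) = n^(2-τ) * (ε^(τ-2) * x^(τ-2)) := by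
      rw [Real.div_rpow (le_of_lt hn0) (le_of_lt hεx),
        Real.mul_rpow (le_of_lt hε0) (le_of_lt hx0)]
      rw [show τ - 2 = -(2-τ) by ring, Real.rpow_neg (le_of_lt hε0),
        Real.rpow_neg (le_of_lt hx0)]
      field_simp
    have hxx : x ^ (1-τ) * x^(τ-2) = x⁻¹ := by
      rw [← Real.rpow_add hx0, show (1:ℝ)-τ+(τ-2) = -1 by ring, Real.rpow_neg_one]
    have key : x ^ (1-τ) * (n/(ε*x))^(2-τ) = ε^(τ-2) * n^(2-τ) * x⁻¹ := by
      rw [ha, ← hxx]; ring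
    have h1 : f x = (x ^ (1-τ) * (n/(ε*x))^(2-τ) - x ^ (1-τ) * n^(2-τ)) / (τ-2) := by
      simp only [hf]
      field_simp
      ring
    have hrhs : (ε^(τ-2)*n^(2-τ)/(τ-2))*x⁻¹ = (ε^(τ-2)*n^(2-τ)*x⁻¹)/(τ-2) := by ring
    rw [h1, key, hC, hrhs, div_le_div_iff_of_pos_right hτ2']
    have hB : 0 ≤ x ^ (1-τ) * n^(2-τ) := by positivity
    linarith
  calc (∫ x in (1:ℝ)..n, f x) ≤ ∫ x in (1:ℝ)..n, C * x⁻¹ :=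
        intervalIntegral.integral_mono_on hn hfInt hgInt hmono
    _ = C * Real.log n := by
        rw [intervalIntegral.integral_const_mul, integral_inv (by
          rw [Set.uIcc_of_le hn]; intro h; exact absurd h.1 (by norm_num))]
        norm_num
    _ = ε^(τ-2) * n^(2-τ) * Real.log n / (τ-2) := by rw [hC]; ring
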